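/- If R is a reduced commutative ring of characteristic 2, then the nilradical of the group algebra AddMonoidAlgebra R G equals the augmentation ideal: nilradical (AddMonoidAlgebra R G) = ker ε. -/

import Mathlib

/-- If `R` is a reduced commutative ring of characteristic 2, the nilradical of the group
algebra of `G = Fin k → ZMod 2` over `R` equals the augmentation ideal `ker ε`. -/
theorem nilradical_groupAlgebra_eq_augmentationIdeal (k : ℕ) (R : Type*) [CommRing R]
    [IsReduced R] [CharP R 2]
    (ε : AddMonoidAlgebra R (Fin k → ZMod 2) →ₐ[R] R)
    (hε : ∀ (g : Fin k → ZMod 2) (r : R), ε (AddMonoidAlgebra.single g r) = r) :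
    nilradical (AddMonoidAlgebra R (Fin k → ZMod 2)) = RingHom.ker ε := by
  set A := AddMonoidAlgebra R (Fin k → ZMod 2)
  apply le_antisymm
  · intro x hx
    rw [mem_nilradical] at hx
    rw [RingHom.mem_ker]
    exact (hx.map ε).eq_zero
  · intro f hf
    rw [RingHom.mem_ker] at hf
    -- ε f is the sum of coefficients
    have hεf : ε f = ∑ g ∈ f.coeff.support, f.coeff g := by
      conv_lhs => rw [← AddMonoidAlgebra.sum_coeff_single f]
      rw [map_finsuppSum]
      simp [Finsupp.sum, hε]
    have hf0 : ∑ g ∈ f.coeff.support, f.coeff g = 0 := by rw [← hεf, hf]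
    -- each single g 1 - 1 is nilpotent
    have h2 : (2 : A) = 0 := by
      have h2R : (2 : R) = 0 := CharTwo.two_eq_zero
      have := map_ofNat (algebraMap R A) 2
      rw [← this, h2R]
      · simp
    have hnil : ∀ g : Fin k → ZMod 2,
        IsNilpotent (AddMonoidAlgebra.single g (1 : R) - 1) := by
      intro g
      refine ⟨2, ?_⟩
      have hgg : g + g = 0 := by
        funext i
        exact CharTwo.add_self_eq_zero (g i)
      have hsq : AddMonoidAlgebra.single g (1 : R) * AddMonoidAlgebra.single g 1
          = 1 := by
        rw [AddMonoidAlgebra.single_mul_single, hgg, mul_one]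
        rfl
      have : (AddMonoidAlgebra.single g (1 : R) - 1) ^ 2
          = AddMonoidAlgebra.single g 1 * AddMonoidAlgebra.single g 1
            - 2 * AddMonoidAlgebra.single g 1 + 1 := by ring
      rw [this, hsq, h2, zero_mul, sub_zero]
      rw [one_add_one_eq_two]; exact h2
    -- write f as a combination of the nilpotent generators
    have key : f = ∑ g ∈ f.coeff.support, f.coeff g • (AddMonoidAlgebra.single g (1 : R) - 1) := by
      have : ∑ g ∈ f.coeff.support, f.coeff g • (AddMonoidAlgebra.single g (1 : R) - 1)
          = (∑ g ∈ f.coeff.support, AddMonoidAlgebra.single g (f.coeff g))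
            - (∑ g ∈ f.coeff.support, f.coeff g) • (1 : A) := by
        simp only [smul_sub, Finset.sum_sub_distrib, AddMonoidAlgebra.smul_single',
          mul_one, Finset.sum_smul]
      rw [this, hf0, zero_smul, sub_zero]
      conv_lhs => rw [← AddMonoidAlgebra.sum_coeff_single f]
      rfl
    rw [key]
    exact Ideal.sum_mem _ fun g _ => mem_nilradical.mpr ((hnil g).smul (f.coeff g))
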